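/- Let (Ω, 𝔉, ℙ) be a probability space with a filtration (𝔉_n)_{n ≥ 1}. Let (τ_n) be a sequence of nonnegative real numbers with Σ_{n=1}^∞ τ_n = ∞, and let (β_n) be a sequence of nonnegative, integrable, real-valued random variables adapted to (𝔉_n). Assume E[ Σ_{n=1}^∞ τ_n·β_n ] < ∞, and that there exists γ > 0 such that for every n, β_n − E[β_{n+1} | 𝔉_n] ≤ γ·τ_n almost surely. Then β_n → 0 almost surely as n → ∞. -/

import Mathlib

open MeasureTheory Filter
open scoped ENNReal NNReal Topology

/-- Technical proposition: let `(τ_n)` be nonnegative reals with `Σ τ_n = ∞` (i.e.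
not summable) and `(β_n)` a nonnegative, integrable, adapted real random sequence
with `E[Σ τ_n β_n] < ∞` and `β_n − E[β_{n+1} | 𝔉_n] ≤ γ τ_n` a.s. for some `γ > 0`.
Then `β_n → 0` almost surely. -/
theorem sgm_technical_proposition
    {Ω : Type*} {mF : MeasurableSpace Ω} (μ : Measure Ω) [IsProbabilityMeasure μ]
    (ℱ : Filtration ℕ mF)
    (τ : ℕ → ℝ) (hτ_nonneg : ∀ n, 0 ≤ τ n) (hτ_div : ¬ Summable τ)
    (β : ℕ → Ω → ℝ)
    (hβ_nonneg : ∀ n ω, 0 ≤ β n ω)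
    (hβ_int : ∀ n, Integrable (β n) μ)
    (hβ_adapted : Adapted ℱ β)
    (hsum : ∫⁻ ω, (∑' n, ENNReal.ofReal (τ n * β n ω)) ∂μ < ⊤)
    (γ : ℝ) (hγ : 0 < γ)
    (hrec : ∀ n, ∀ᵐ ω ∂μ, β n ω - (μ[β (n + 1) | ℱ n]) ω ≤ γ * τ n) :
    ∀ᵐ ω ∂μ, Tendsto (fun n => β n ω) atTop (nhds 0) := by
  classical
  have hβmeas : ∀ n, Measurable (β n) := fun n =>
    (hβ_adapted n).mono (ℱ.le n) le_rfl
  set F : ℕ → Ω → ℝ≥0∞ :=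
    fun n ω => ∑' k, ENNReal.ofReal (τ (n + k) * β (n + k) ω) with hFdef
  have hFmeas : ∀ n, Measurable (F n) := fun n =>
    Measurable.ennreal_tsum fun k =>
      (measurable_const.mul (hβmeas (n + k))).ennreal_ofReal
  have hF0eq : ∀ ω, F 0 ω = ∑' n, ENNReal.ofReal (τ n * β n ω) := fun ω => by
    simp [hFdef]
  have hF0fin : ∀ᵐ ω ∂μ, F 0 ω ≠ ⊤ := by
    have h := ae_lt_top (hFmeas 0) (by
      rw [show (fun ω => F 0 ω) = fun ω => ∑' n, ENNReal.ofReal (τ n * β n ω) from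
        funext hF0eq]
      exact hsum.ne)
    filter_upwards [h] with ω hω using hω.ne
  have hFmono : ∀ m n, m ≤ n → ∀ ω, F n ω ≤ F m ω := by
    intro m n hmn ω
    have h1 : F n ω = ∑' k, ENNReal.ofReal
        (τ (m + ((n - m) + k)) * β (m + ((n - m) + k)) ω) :=
      tsum_congr fun k => by rw [show m + ((n - m) + k) = n + k by omega]
    rw [h1]
    exact ENNReal.tsum_comp_le_tsum_of_injective
      (fun a b h => by omega) (fun k => ENNReal.ofReal (τ (m + k) * β (m + k) ω))
  set T : ℕ → Ω → ℝ := fun n ω => (F n ω).toReal with hTdef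
  have hTnonneg : ∀ n ω, 0 ≤ T n ω := fun n ω => ENNReal.toReal_nonneg
  have hTmeas : ∀ n, Measurable (T n) := fun n => (hFmeas n).ennreal_toReal
  have hFfin : ∀ n ω, F 0 ω ≠ ⊤ → F n ω ≠ ⊤ := fun n ω hω =>
    ((lt_of_le_of_lt (hFmono 0 n (Nat.zero_le n) ω) (lt_top_iff_ne_top.mpr hω))).ne
  have hpartle : ∀ n r ω, F 0 ω ≠ ⊤ →
      ∑ k ∈ Finset.range r, τ (n + k) * β (n + k) ω ≤ T n ω := by
    intro n r ω hω
    have h1 : ∑ k ∈ Finset.range r, ENNReal.ofReal (τ (n + k) * β (n + k) ω) ≤ F n ω :=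
      ENNReal.sum_le_tsum _
    have h2 : (∑ k ∈ Finset.range r, ENNReal.ofReal (τ (n + k) * β (n + k) ω)).toReal
        = ∑ k ∈ Finset.range r, τ (n + k) * β (n + k) ω := by
      rw [ENNReal.toReal_sum (fun a _ => ENNReal.ofReal_ne_top)]
      exact Finset.sum_congr rfl fun a _ =>
        ENNReal.toReal_ofReal (mul_nonneg (hτ_nonneg _) (hβ_nonneg _ _))
    rw [← h2]
    exact ENNReal.toReal_mono (hFfin n ω hω) h1
  have hTint : ∀ n, Integrable (T n) μ := by
    intro n
    refine ⟨(hTmeas n).stronglyMeasurable.aestronglyMeasurable, ?_⟩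
    have hb : ∀ ω, (‖T n ω‖₊ : ℝ≥0∞) ≤ F 0 ω := by
      intro ω
      calc (‖T n ω‖₊ : ℝ≥0∞) = ENNReal.ofReal (T n ω) := by
            exact Real.enorm_eq_ofReal (hTnonneg n ω)
        _ ≤ F n ω := ENNReal.ofReal_toReal_le
        _ ≤ F 0 ω := hFmono 0 n (Nat.zero_le n) ω
    have : ∫⁻ ω, (‖T n ω‖₊ : ℝ≥0∞) ∂μ ≤ ∫⁻ ω, F 0 ω ∂μ := lintegral_mono hb
    refine lt_of_le_of_lt this ?_
    rw [show (fun ω => F 0 ω) = fun ω => ∑' n, ENNReal.ofReal (τ n * β n ω) from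
      funext hF0eq]
    exact hsum
  have hTtend : ∀ᵐ ω ∂μ, Tendsto (fun n => T n ω) atTop (𝓝 0) := by
    filter_upwards [hF0fin] with ω hω
    have h1 : Tendsto (fun n => F n ω) atTop (𝓝 0) := by
      have h2 := ENNReal.tendsto_sum_nat_add
        (fun k => ENNReal.ofReal (τ k * β k ω)) (by rw [← hF0eq ω]; exact hω)
      have h3 : (fun n => F n ω)
          = fun i => ∑' k, ENNReal.ofReal (τ (k + i) * β (k + i) ω) := by
        funext i
        exact tsum_congr fun k => by rw [add_comm]
      rw [h3]
      exact h2
    have h4 := (ENNReal.tendsto_toReal (by simp : (0 : ℝ≥0∞) ≠ ⊤)).comp h1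
    exact h4
  -- the conditional drift chain
  have hchain : ∀ n k,
      (fun ω => β n ω - γ * ∑ j ∈ Finset.range k, τ (n + j)) ≤ᵐ[μ] μ[β (n + k)|ℱ n] := by
    intro n k
    induction k with
    | zero =>
      rw [show β (n + 0) = β n from rfl,
        condExp_of_stronglyMeasurable (ℱ.le n) (hβ_adapted n).stronglyMeasurable (hβ_int n)]
      filter_upwards with ω
      simp
    | succ k ih =>
      have h2 : (β (n + k) - fun _ => γ * τ (n + k)) ≤ᵐ[μ] μ[β (n + k + 1)|ℱ (n + k)] := by
        filter_upwards [hrec (n + k)] with ω h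
        simp only [Pi.sub_apply]
        linarith
      have h3 := condExp_mono (m := ℱ n)
        ((hβ_int (n + k)).sub (integrable_const (γ * τ (n + k))))
        integrable_condExp h2
      have h4 : μ[μ[β (n + k + 1)|ℱ (n + k)]|ℱ n] =ᵐ[μ] μ[β (n + k + 1)|ℱ n] :=
        condExp_condExp_of_le (ℱ.mono (Nat.le_add_right n k)) (ℱ.le (n + k))
      have h5 := condExp_sub (m := ℱ n) (μ := μ)
        (f := β (n + k)) (g := fun _ => γ * τ (n + k))
        (hβ_int (n + k)) (integrable_const _)
      rw [condExp_const (ℱ.le n)] at h5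
      filter_upwards [ih, h3, h4, h5] with ω hih h3ω h4ω h5ω
      rw [Finset.sum_range_succ]
      have h6 : (μ[β (n + k) - fun _ => γ * τ (n + k)|ℱ n]) ω
          = (μ[β (n + k)|ℱ n]) ω - γ * τ (n + k) := by
        rw [h5ω]; simp
      show β n ω - γ * (∑ j ∈ Finset.range k, τ (n + j) + τ (n + k))
          ≤ (μ[β (n + k + 1)|ℱ n]) ω
      rw [← h4ω]
      have h7 := h3ω
      rw [h6] at h7
      linarith
  set G : ℕ → Ω → ℝ := fun n => μ[T n|ℱ n] with hGdef
  -- key inequality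
  have hkey : ∀ ε : ℝ, 0 < ε → ∀ᵐ ω ∂μ, ∀ n, β n ω ≤ ε + (γ / ε) * G n ω := by
    intro ε hε
    rw [ae_all_iff]
    intro n
    have hns : ¬ Summable (fun j => τ (n + j)) := by
      intro h
      have h' : Summable fun j => τ (j + n) := by
        simpa [Nat.add_comm] using h
      exact hτ_div ((summable_nat_add_iff n).mp h')
    have hdiv2 : ∃ r, ε / γ ≤ ∑ j ∈ Finset.range r, τ (n + j) := by
      have h := (not_summable_iff_tendsto_nat_atTop_of_nonneg
        (fun j => hτ_nonneg (n + j))).mp hns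
      exact (h.eventually_ge_atTop (ε / γ)).exists
    set K := Nat.find hdiv2 with hKdef
    have hK : ε / γ ≤ ∑ j ∈ Finset.range K, τ (n + j) := Nat.find_spec hdiv2
    have hKmin : ∀ r < K, ∑ j ∈ Finset.range r, τ (n + j) < ε / γ := fun r hr =>
      lt_of_not_ge (Nat.find_min hdiv2 hr)
    have hint : ∀ k, Integrable (τ (n + k) • β (n + k)) μ := fun k =>
      (hβ_int (n + k)).smul (τ (n + k))
    have hsum_ce := condExp_finsetSum (m := ℱ n) (μ := μ)
      (s := Finset.range K) (f := fun k => τ (n + k) • β (n + k)) (fun k _ => hint k)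
    have hTge : (∑ k ∈ Finset.range K, τ (n + k) • β (n + k)) ≤ᵐ[μ] T n := by
      filter_upwards [hF0fin] with ω hω
      have := hpartle n K ω hω
      simpa [Finset.sum_apply, Pi.smul_apply, smul_eq_mul] using this
    have hintsum : Integrable (∑ k ∈ Finset.range K, τ (n + k) • β (n + k)) μ := by
      have h := integrable_finset_sum (μ := μ) (Finset.range K)
        (f := fun k => τ (n + k) • β (n + k)) (fun k _ => hint k)
      have heq : (∑ k ∈ Finset.range K, τ (n + k) • β (n + k))
          = (fun a => ∑ k ∈ Finset.range K, (τ (n + k) • β (n + k)) a) := by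
        funext a
        simp [Finset.sum_apply]
      rw [heq]
      exact h
    have h6 : μ[∑ k ∈ Finset.range K, τ (n + k) • β (n + k)|ℱ n] ≤ᵐ[μ] G n :=
      condExp_mono hintsum (hTint n) hTge
    have h7 : ∀ k, k < K →
        (fun ω => τ (n + k) * (β n ω - ε)) ≤ᵐ[μ] μ[τ (n + k) • β (n + k)|ℱ n] := by
      intro k hk
      have hS : γ * ∑ j ∈ Finset.range k, τ (n + j) ≤ ε := by
        have h := hKmin k hk
        rw [lt_div_iff₀ hγ] at h
        nlinarith
      filter_upwards [hchain n k, condExp_smul (μ := μ) (m := ℱ n)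
        (τ (n + k)) (β (n + k))] with ω hω hsω
      rw [hsω]
      simp only [Pi.smul_apply, smul_eq_mul]
      have h8 : β n ω - ε ≤ (μ[β (n + k)|ℱ n]) ω := le_trans (by linarith) hω
      exact mul_le_mul_of_nonneg_left h8 (hτ_nonneg (n + k))
    have h7' : ∀ᵐ ω ∂μ, ∀ k, k < K →
        τ (n + k) * (β n ω - ε) ≤ (μ[τ (n + k) • β (n + k)|ℱ n]) ω := by
      rw [ae_all_iff]
      intro k
      by_cases hk : k < K
      · filter_upwards [h7 k hk] with ω hω _
        exact hω
      · filter_upwards with ω hk'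
        exact absurd hk' hk
    have hGnn : 0 ≤ᵐ[μ] G n :=
      condExp_nonneg (Eventually.of_forall fun ω => hTnonneg n ω)
    filter_upwards [h6, hsum_ce, h7', hGnn] with ω h6ω hceω h7ω hGposω
    by_cases hb : β n ω ≤ ε
    · have : 0 ≤ (γ / ε) * G n ω :=
        mul_nonneg (le_of_lt (div_pos hγ hε)) hGposω
      linarith
    · push_neg at hb
      have hSsum : (∑ j ∈ Finset.range K, τ (n + j)) * (β n ω - ε) ≤ G n ω := by
        have hc1 : ∑ k ∈ Finset.range K, τ (n + k) * (β n ω - ε)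
            ≤ ∑ k ∈ Finset.range K, (μ[τ (n + k) • β (n + k)|ℱ n]) ω :=
          Finset.sum_le_sum fun k hk => h7ω k (Finset.mem_range.mp hk)
        have hc2 : (∑ k ∈ Finset.range K, (μ[τ (n + k) • β (n + k)|ℱ n])) ω
            = ∑ k ∈ Finset.range K, (μ[τ (n + k) • β (n + k)|ℱ n]) ω := by
          simp [Finset.sum_apply]
        calc (∑ k ∈ Finset.range K, τ (n + k)) * (β n ω - ε)
            = ∑ k ∈ Finset.range K, τ (n + k) * (β n ω - ε) := by
              rw [Finset.sum_mul]
          _ ≤ ∑ k ∈ Finset.range K, (μ[τ (n + k) • β (n + k)|ℱ n]) ω := hc1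
          _ = (μ[∑ k ∈ Finset.range K, τ (n + k) • β (n + k)|ℱ n]) ω := by
              rw [hceω, hc2]
          _ ≤ G n ω := h6ω
      have h2 : (ε / γ) * (β n ω - ε) ≤ G n ω :=
        le_trans (mul_le_mul_of_nonneg_right hK (by linarith)) hSsum
      have h3 := mul_le_mul_of_nonneg_left h2 (le_of_lt (div_pos hγ hε))
      have hx : γ / ε * (ε / γ * (β n ω - ε)) = β n ω - ε := by
        field_simp
      rw [hx] at h3
      linarith
  -- G tends to zero a.s. via Lévy's upward theorem
  have hGtend : ∀ᵐ ω ∂μ, Tendsto (fun n => G n ω) atTop (𝓝 0) := by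
    have hTmeas' : ∀ m, StronglyMeasurable[⨆ n, ℱ n] (T m) := by
      intro m
      have hFm : Measurable[⨆ n, ℱ n] (F m) :=
        Measurable.ennreal_tsum fun k =>
          (Measurable.mul measurable_const
            ((hβ_adapted (m + k)).mono
              (le_iSup (fun n => (ℱ n : MeasurableSpace Ω)) (m + k)) le_rfl)).ennreal_ofReal
      exact (Measurable.ennreal_toReal hFm).stronglyMeasurable
    have hlevy : ∀ m, ∀ᵐ ω ∂μ,
        Tendsto (fun n => (μ[T m|ℱ n]) ω) atTop (𝓝 (T m ω)) := fun m =>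
      (hTint m).tendsto_ae_condExp (hTmeas' m)
    have hmono' : ∀ᵐ ω ∂μ, ∀ m n, m ≤ n → G n ω ≤ (μ[T m|ℱ n]) ω := by
      rw [ae_all_iff]
      intro m
      rw [ae_all_iff]
      intro n
      by_cases h : m ≤ n
      · have hTn_le : T n ≤ᵐ[μ] T m := by
          filter_upwards [hF0fin] with ω hω
          exact ENNReal.toReal_mono (hFfin m ω hω) (hFmono m n h ω)
        filter_upwards [condExp_mono (hTint n) (hTint m) hTn_le] with ω hω _
        exact hω
      · filter_upwards with ω h'
        exact absurd h' h
    have hGnn : ∀ᵐ ω ∂μ, ∀ n, 0 ≤ G n ω := by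
      rw [ae_all_iff]
      exact fun n => condExp_nonneg (Eventually.of_forall fun ω => hTnonneg n ω)
    filter_upwards [hTtend, ae_all_iff.mpr hlevy, hmono', hGnn] with ω hT hl hm hnn
    rw [Metric.tendsto_atTop]
    intro δ hδ
    obtain ⟨m, hm2⟩ := (hT.eventually_lt_const (half_pos hδ)).exists
    obtain ⟨N, hN⟩ := eventually_atTop.mp ((hl m).eventually_lt_const hm2)
    refine ⟨max m N, fun n hn => ?_⟩
    have h1 : G n ω ≤ (μ[T m|ℱ n]) ω := hm m n (le_trans (le_max_left _ _) hn)
    have h2 : (μ[T m|ℱ n]) ω < δ / 2 := hN n (le_trans (le_max_right _ _) hn)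
    rw [Real.dist_eq, sub_zero, abs_of_nonneg (hnn n)]
    linarith
  -- conclusion
  have hkey' : ∀ᵐ ω ∂μ, ∀ j : ℕ, ∀ n,
      β n ω ≤ 1 / ((j : ℝ) + 1) + (γ / (1 / ((j : ℝ) + 1))) * G n ω := by
    rw [ae_all_iff]
    exact fun j => hkey (1 / ((j : ℝ) + 1)) (by positivity)
  filter_upwards [hGtend, hkey'] with ω hG hk
  rw [Metric.tendsto_atTop]
  intro δ hδ
  obtain ⟨j, hj⟩ := exists_nat_one_div_lt (half_pos hδ)
  have hε : (0 : ℝ) < 1 / ((j : ℝ) + 1) := by positivity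
  have hγε : (0 : ℝ) < γ / (1 / ((j : ℝ) + 1)) := div_pos hγ hε
  have hδ2 : (0 : ℝ) < (δ / 2) / (γ / (1 / ((j : ℝ) + 1))) := div_pos (half_pos hδ) hγε
  obtain ⟨N, hN⟩ := eventually_atTop.mp (hG.eventually_lt_const hδ2)
  refine ⟨N, fun n hn => ?_⟩
  rw [Real.dist_eq, sub_zero, abs_of_nonneg (hβ_nonneg n ω)]
  have h1 := hk j n
  have h2 : G n ω < (δ / 2) / (γ / (1 / ((j : ℝ) + 1))) := hN n hn
  have h3 : (γ / (1 / ((j : ℝ) + 1))) * G n ω < δ / 2 := by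
    have h4 := mul_lt_mul_of_pos_left h2 hγε
    rwa [mul_div_cancel₀ _ (ne_of_gt hγε)] at h4
  linarith
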